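/- Let Ω := 𝕋²×(−1,1), let η : [0,T]×Ω → ℝ³ be C² with invertible spatial Jacobian at every point, v := ∂_tη, A := [∂η]^{−1}, J := det[∂η], and let R > 0 be C¹ with ∂_t R + R·div_A v = 0 and b be C¹ with ∂_t b_i = b_j A^{kj} ∂_k v_i − b_i (A^{kj}∂_k v_j). Then for each l = 1,2,3 the scalar function (b_i A^{li})/R is independent of t; consequently, if η(0,·) = Id, R(0,·) = ρ₀ and b(0,·) = b₀, then b_i A^{li} = J^{−1} b₀^l for all t. -/

import Mathlib

noncomputable section

open Set MeasureTheory Matrix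

abbrev V3 : Type := Fin 3 → ℝ

/-- The `l`-th standard basis vector of `ℝ³`. -/
def e3 (l : Fin 3) : V3 := Pi.single l 1

/-- Spatial partial derivative `∂_l f` of a scalar field. -/
def pd (l : Fin 3) (f : V3 → ℝ) (y : V3) : ℝ := fderiv ℝ f y (e3 l)

/-- Ω = 𝕋² × (−1,1), modeled periodically as ℝ² × (−1,1) ⊆ ℝ³. -/
def Om : Set V3 := {y | y 2 ∈ Ioo (-1 : ℝ) 1}

/-- Γ = 𝕋² × ({−1} ∪ {1}). -/
def Gam : Set V3 := {y | y 2 = -1 ∨ y 2 = 1}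

/-- Jacobian matrix `[∂η](t,y)`, with entry `(i, l)` equal to `∂_l η_i`. -/
def Dmat (η : ℝ → V3 → V3) (t : ℝ) (y : V3) : Matrix (Fin 3) (Fin 3) ℝ :=
  Matrix.of fun i l => pd l (fun z => η t z i) y

/-- `J = det [∂η]`. -/
def Jdet (η : ℝ → V3 → V3) (t : ℝ) (y : V3) : ℝ := (Dmat η t y).det

/-- `A = [∂η]⁻¹`, with entry `(l, i)` equal to `A^{li}`. -/
def Amat (η : ℝ → V3 → V3) (t : ℝ) (y : V3) : Matrix (Fin 3) (Fin 3) ℝ :=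
  (Dmat η t y)⁻¹

/-- `div_A X = A^{li} ∂_l X_i`. -/
def divA (η : ℝ → V3 → V3) (X : ℝ → V3 → V3) (t : ℝ) (y : V3) : ℝ :=
  ∑ l, ∑ i, Amat η t y l i * pd l (fun z => X t z i) y

def adjE (X : Matrix (Fin 3) (Fin 3) ℝ) (l i : Fin 3) : ℝ :=
  X (i+1) (l+1) * X (i+2) (l+2) - X (i+1) (l+2) * X (i+2) (l+1)

set_option maxHeartbeats 1000000 in
lemma keyIdentity0 (D M : Matrix (Fin 3) (Fin 3) ℝ) (bb : Fin 3 → ℝ)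
    (hδ : D.det ≠ 0) :
    (∑ i, (((∑ j, ∑ k, bb j * (D.det⁻¹ * adjE D k j) * M i k)
        - bb i * (∑ k, ∑ j, (D.det⁻¹ * adjE D k j) * M j k)) * adjE D (0:Fin 3) i
      + bb i * (M (i+1) ((0:Fin 3)+1) * D (i+2) ((0:Fin 3)+2) + D (i+1) ((0:Fin 3)+1) * M (i+2) ((0:Fin 3)+2)
        - (M (i+1) ((0:Fin 3)+2) * D (i+2) ((0:Fin 3)+1) + D (i+1) ((0:Fin 3)+2) * M (i+2) ((0:Fin 3)+1))))) = 0 := by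
  have hd : D.det = D 0 0 * D 1 1 * D 2 2 - D 0 0 * D 1 2 * D 2 1 - D 0 1 * D 1 0 * D 2 2
      + D 0 1 * D 1 2 * D 2 0 + D 0 2 * D 1 0 * D 2 1 - D 0 2 * D 1 1 * D 2 0 :=
    Matrix.det_fin_three D
  simp only [Fin.sum_univ_three, adjE]
  simp only [show (0:Fin 3)+1 = 1 from rfl, show (0:Fin 3)+2 = 2 from rfl,
    show (1:Fin 3)+1 = 2 from rfl, show (1:Fin 3)+2 = 0 from rfl,
    show (2:Fin 3)+1 = 0 from rfl, show (2:Fin 3)+2 = 1 from rfl]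
  field_simp
  rw [hd]
  ring

set_option maxHeartbeats 1000000 in
lemma keyIdentity1 (D M : Matrix (Fin 3) (Fin 3) ℝ) (bb : Fin 3 → ℝ)
    (hδ : D.det ≠ 0) :
    (∑ i, (((∑ j, ∑ k, bb j * (D.det⁻¹ * adjE D k j) * M i k)
        - bb i * (∑ k, ∑ j, (D.det⁻¹ * adjE D k j) * M j k)) * adjE D (1:Fin 3) i
      + bb i * (M (i+1) ((1:Fin 3)+1) * D (i+2) ((1:Fin 3)+2) + D (i+1) ((1:Fin 3)+1) * M (i+2) ((1:Fin 3)+2)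
        - (M (i+1) ((1:Fin 3)+2) * D (i+2) ((1:Fin 3)+1) + D (i+1) ((1:Fin 3)+2) * M (i+2) ((1:Fin 3)+1))))) = 0 := by
  have hd : D.det = D 0 0 * D 1 1 * D 2 2 - D 0 0 * D 1 2 * D 2 1 - D 0 1 * D 1 0 * D 2 2
      + D 0 1 * D 1 2 * D 2 0 + D 0 2 * D 1 0 * D 2 1 - D 0 2 * D 1 1 * D 2 0 :=
    Matrix.det_fin_three D
  simp only [Fin.sum_univ_three, adjE]
  simp only [show (0:Fin 3)+1 = 1 from rfl, show (0:Fin 3)+2 = 2 from rfl,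
    show (1:Fin 3)+1 = 2 from rfl, show (1:Fin 3)+2 = 0 from rfl,
    show (2:Fin 3)+1 = 0 from rfl, show (2:Fin 3)+2 = 1 from rfl]
  field_simp
  rw [hd]
  ring

set_option maxHeartbeats 1000000 in
lemma keyIdentity2 (D M : Matrix (Fin 3) (Fin 3) ℝ) (bb : Fin 3 → ℝ)
    (hδ : D.det ≠ 0) :
    (∑ i, (((∑ j, ∑ k, bb j * (D.det⁻¹ * adjE D k j) * M i k)
        - bb i * (∑ k, ∑ j, (D.det⁻¹ * adjE D k j) * M j k)) * adjE D (2:Fin 3) i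
      + bb i * (M (i+1) ((2:Fin 3)+1) * D (i+2) ((2:Fin 3)+2) + D (i+1) ((2:Fin 3)+1) * M (i+2) ((2:Fin 3)+2)
        - (M (i+1) ((2:Fin 3)+2) * D (i+2) ((2:Fin 3)+1) + D (i+1) ((2:Fin 3)+2) * M (i+2) ((2:Fin 3)+1))))) = 0 := by
  have hd : D.det = D 0 0 * D 1 1 * D 2 2 - D 0 0 * D 1 2 * D 2 1 - D 0 1 * D 1 0 * D 2 2
      + D 0 1 * D 1 2 * D 2 0 + D 0 2 * D 1 0 * D 2 1 - D 0 2 * D 1 1 * D 2 0 :=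
    Matrix.det_fin_three D
  simp only [Fin.sum_univ_three, adjE]
  simp only [show (0:Fin 3)+1 = 1 from rfl, show (0:Fin 3)+2 = 2 from rfl,
    show (1:Fin 3)+1 = 2 from rfl, show (1:Fin 3)+2 = 0 from rfl,
    show (2:Fin 3)+1 = 0 from rfl, show (2:Fin 3)+2 = 1 from rfl]
  field_simp
  rw [hd]
  ring


set_option maxHeartbeats 1000000 in
lemma jacobiQ (D M : Matrix (Fin 3) (Fin 3) ℝ) (r dv : ℝ) (hδ : D.det ≠ 0)
    (hdv : dv = ∑ l, ∑ i, (D.det⁻¹ * adjE D l i) * M i l) :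
    ((M 0 0 * D 1 1 + D 0 0 * M 1 1) * D 2 2 + D 0 0 * D 1 1 * M 2 2
      - ((M 0 0 * D 1 2 + D 0 0 * M 1 2) * D 2 1 + D 0 0 * D 1 2 * M 2 1)
      - ((M 0 1 * D 1 0 + D 0 1 * M 1 0) * D 2 2 + D 0 1 * D 1 0 * M 2 2)
      + ((M 0 1 * D 1 2 + D 0 1 * M 1 2) * D 2 0 + D 0 1 * D 1 2 * M 2 0)
      + ((M 0 2 * D 1 0 + D 0 2 * M 1 0) * D 2 1 + D 0 2 * D 1 0 * M 2 1)
      - ((M 0 2 * D 1 1 + D 0 2 * M 1 1) * D 2 0 + D 0 2 * D 1 1 * M 2 0)) * r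
      + D.det * -(r * dv) = 0 := by
  subst hdv
  simp only [Fin.sum_univ_three, adjE]
  simp only [show (0:Fin 3)+1 = 1 from rfl, show (0:Fin 3)+2 = 2 from rfl,
    show (1:Fin 3)+1 = 2 from rfl, show (1:Fin 3)+2 = 0 from rfl,
    show (2:Fin 3)+1 = 0 from rfl, show (2:Fin 3)+2 = 1 from rfl]
  field_simp [hδ]
  ring

set_option maxHeartbeats 1000000 in
lemma adjE_eq (X : Matrix (Fin 3) (Fin 3) ℝ) (l i : Fin 3) :
    X.adjugate l i = adjE X l i := by
  rw [Matrix.adjugate_fin_three]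
  fin_cases l <;> fin_cases i <;> simp [adjE] <;> ring

set_option maxHeartbeats 1000000 in
lemma etaEntryDeriv
    (η : ℝ → V3 → V3) (hη : ContDiff ℝ 2 (fun p : ℝ × V3 => η p.1 p.2))
    (v : ℝ → V3 → V3) (hv : ∀ t y, v t y = deriv (fun s => η s y) t)
    (i k : Fin 3) (y : V3) (t : ℝ) :
    HasDerivAt (fun s => pd k (fun z => η s z i) y) (pd k (fun z => v t z i) y) t := by
  have hf : ContDiff ℝ 2 (fun p : ℝ × V3 => η p.1 p.2 i) := contDiff_pi.mp hη i
  set f : ℝ × V3 → ℝ := fun p => η p.1 p.2 i with hfdef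
  set Φ : ℝ × V3 → (ℝ × V3 →L[ℝ] ℝ) := fderiv ℝ f with hΦdef
  have hΦ : ContDiff ℝ 1 Φ := hf.fderiv_right (by norm_num)
  have hfd : Differentiable ℝ f := hf.differentiable (by norm_num)
  have hΦd : Differentiable ℝ Φ := hΦ.differentiable (by norm_num)
  have hcurve : ∀ (s : ℝ) (x : V3), HasFDerivAt (fun z : V3 => ((s, z) : ℝ × V3))
      (ContinuousLinearMap.inr ℝ ℝ V3) x := fun s x =>
    (hasFDerivAt_const s x).prodMk (hasFDerivAt_id x)
  have hpdf : ∀ (s : ℝ) (x : V3), HasFDerivAt (fun z => f (s, z))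
      ((Φ (s, x)).comp (ContinuousLinearMap.inr ℝ ℝ V3)) x := fun s x =>
    (hfd (s, x)).hasFDerivAt.comp x (hcurve s x)
  have hpd_eq : ∀ s : ℝ, pd k (fun z => η s z i) y = Φ (s, y) (0, e3 k) := by
    intro s
    have h1 := (hpdf s y).fderiv
    show fderiv ℝ (fun z => f (s, z)) y (e3 k) = _
    rw [h1]
    simp
  have hvi : ∀ z, v t z i = Φ (t, z) (1, 0) := by
    intro z
    have hcurve2 : HasDerivAt (fun s : ℝ => ((s, z) : ℝ × V3)) (1, (0 : V3)) t :=
      (hasDerivAt_id t).prodMk (hasDerivAt_const t z)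
    have hηd : HasDerivAt (fun s => η s z)
        (fderiv ℝ (fun p : ℝ × V3 => η p.1 p.2) (t, z) (1, 0)) t :=
      by have := ((hη.differentiable (by norm_num) (t, z)).hasFDerivAt).comp_hasDerivAt t hcurve2; exact this
    have h2 : HasDerivAt (fun s => η s z i) (Φ (t, z) (1, 0)) t :=
      by have := (hfd (t, z)).hasFDerivAt.comp_hasDerivAt t hcurve2; exact this
    have h3 : HasDerivAt (fun s => η s z i)
        ((fderiv ℝ (fun p : ℝ × V3 => η p.1 p.2) (t, z) (1, 0)) i) t :=
      hasDerivAt_pi.mp hηd i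
    rw [hv, hηd.deriv]
    exact h3.unique h2
  have hΦline : HasDerivAt (fun s => Φ (s, y)) (fderiv ℝ Φ (t, y) (1, 0)) t :=
    (hΦd (t, y)).hasFDerivAt.comp_hasDerivAt t
      ((hasDerivAt_id t).prodMk (hasDerivAt_const t y))
  have hmain : HasDerivAt (fun s => Φ (s, y) (0, e3 k))
      (fderiv ℝ Φ (t, y) (1, 0) (0, e3 k)) t := by
    have := hΦline.clm_apply (hasDerivAt_const t ((0 : ℝ), e3 k))
    simpa using this
  have hsym : fderiv ℝ Φ (t, y) (1, 0) (0, e3 k) = fderiv ℝ Φ (t, y) (0, e3 k) (1, 0) :=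
    hf.contDiffAt.isSymmSndFDerivAt (by simp) _ _
  have hm : pd k (fun z => v t z i) y = fderiv ℝ Φ (t, y) (0, e3 k) (1, 0) := by
    have heq : (fun z => v t z i) = fun z => Φ (t, z) ((1 : ℝ), (0 : V3)) := funext hvi
    have h1 : HasFDerivAt (fun z => Φ (t, z))
        ((fderiv ℝ Φ (t, y)).comp (ContinuousLinearMap.inr ℝ ℝ V3)) y :=
      (hΦd (t, y)).hasFDerivAt.comp y (hcurve t y)
    have h2 := h1.clm_apply (hasFDerivAt_const ((1 : ℝ), (0 : V3)) y)
    show fderiv ℝ (fun z => v t z i) y (e3 k) = _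
    rw [heq, h2.fderiv]
    simp
  have hfun : (fun s => pd k (fun z => η s z i) y) = fun s => Φ (s, y) (0, e3 k) :=
    funext hpd_eq
  rw [hfun, hm, ← hsym]
  exact hmain

set_option maxHeartbeats 1000000

/-- Under the continuity and induction equations, `(b_i A^{li})/R` is
independent of `t` for each `l`; consequently, if `η(0,·) = Id`, `R(0,·) = ρ₀`, `b(0,·) = b₀`,
then `b_i A^{li} = J⁻¹ b₀^l` for all `t`. -/
theorem b_dot_A_over_R_conserved
    (T : ℝ) (hT : 0 ≤ T)
    (η : ℝ → V3 → V3)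
    (hη : ContDiff ℝ 2 (fun p : ℝ × V3 => η p.1 p.2))
    (hinv : ∀ t ∈ Icc (0 : ℝ) T, ∀ y ∈ Om, (Dmat η t y).det ≠ 0)
    (v : ℝ → V3 → V3)
    (hv : ∀ t y, v t y = deriv (fun s => η s y) t)
    (R : ℝ → V3 → ℝ)
    (hR : ContDiff ℝ 1 (fun p : ℝ × V3 => R p.1 p.2))
    (hRpos : ∀ t y, 0 < R t y)
    (hcont : ∀ t ∈ Icc (0 : ℝ) T, ∀ y ∈ Om,
      deriv (fun s => R s y) t + R t y * divA η v t y = 0)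
    (b : ℝ → V3 → V3)
    (hb : ContDiff ℝ 1 (fun p : ℝ × V3 => b p.1 p.2))
    (hind : ∀ t ∈ Icc (0 : ℝ) T, ∀ y ∈ Om, ∀ i : Fin 3,
      deriv (fun s => b s y i) t
        = (∑ j, ∑ k, b t y j * Amat η t y k j * pd k (fun z => v t z i) y)
          - b t y i * divA η v t y) :
    (∀ l : Fin 3, ∀ t ∈ Icc (0 : ℝ) T, ∀ y ∈ Om,
        (∑ i, b t y i * Amat η t y l i) / R t y
          = (∑ i, b 0 y i * Amat η 0 y l i) / R 0 y)
    ∧ ((∀ z, η 0 z = z) →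
        ∀ (ρ₀ : V3 → ℝ) (b₀ : V3 → V3), (∀ z, R 0 z = ρ₀ z) → (∀ z, b 0 z = b₀ z) →
        ∀ l : Fin 3, ∀ t ∈ Icc (0 : ℝ) T, ∀ y ∈ Om,
          ∑ i, b t y i * Amat η t y l i = (Jdet η t y)⁻¹ * b₀ y l) := by
  have h0T : (0 : ℝ) ∈ Icc (0 : ℝ) T := left_mem_Icc.mpr hT
  have hdd : ∀ (y : V3) (t : ℝ) (a c : Fin 3),
      HasDerivAt (fun s => Dmat η s y a c) (pd c (fun z => v t z a) y) t :=
    fun y t a c => etaEntryDeriv η hη v hv a c y t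
  have hA : ∀ (t : ℝ) (y : V3) (a c : Fin 3),
      Amat η t y a c = ((Dmat η t y).det)⁻¹ * adjE (Dmat η t y) a c := by
    intro t y a c
    rw [Amat, Matrix.inv_def, Matrix.smul_apply, adjE_eq, smul_eq_mul,
      Ring.inverse_eq_inv']
  have hbdiff : ∀ (y : V3) (i : Fin 3), Differentiable ℝ (fun s => b s y i) := by
    intro y i
    exact ((contDiff_pi.mp hb i).comp
      (contDiff_id.prodMk contDiff_const)).differentiable (by norm_num)
  have hRdiff : ∀ (y : V3), Differentiable ℝ (fun s => R s y) := by
    intro y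
    exact (hR.comp (contDiff_id.prodMk contDiff_const)).differentiable (by norm_num)
  have hdcont : ∀ (y : V3) (a c : Fin 3), Continuous fun s => Dmat η s y a c := by
    intro y a c
    exact continuous_iff_continuousAt.mpr fun t => (hdd y t a c).continuousAt
  have hadjcont : ∀ (y : V3) (l i : Fin 3),
      Continuous fun s => adjE (Dmat η s y) l i := by
    intro y l i
    exact ((hdcont y _ _).mul (hdcont y _ _)).sub ((hdcont y _ _).mul (hdcont y _ _))
  have hNconst : ∀ y ∈ Om, ∀ (l : Fin 3), ∀ t ∈ Icc (0 : ℝ) T,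
      (∑ i, b t y i * adjE (Dmat η t y) l i)
        = ∑ i, b 0 y i * adjE (Dmat η 0 y) l i := by
    intro y hy l
    refine constant_of_has_deriv_right_zero
      (f := fun s => ∑ i, b s y i * adjE (Dmat η s y) l i) ?_ ?_
    · exact (continuous_finset_sum _ fun i _ =>
        ((hbdiff y i).continuous).mul (hadjcont y l i)).continuousOn
    · intro x hx
      have hx' : x ∈ Icc (0 : ℝ) T := Ico_subset_Icc_self hx
      have hδ : (Dmat η x y).det ≠ 0 := hinv x hx' y hy
      have hbd : ∀ i : Fin 3, HasDerivAt (fun s => b s y i)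
          ((∑ j, ∑ k, b x y j * Amat η x y k j * pd k (fun z => v x z i) y)
            - b x y i * divA η v x y) x := by
        intro i
        have h := ((hbdiff y i) x).hasDerivAt
        rwa [hind x hx' y hy i] at h
      have hadjd : ∀ (i : Fin 3), HasDerivAt (fun s => adjE (Dmat η s y) l i)
          (pd (l+1) (fun z => v x z (i+1)) y * Dmat η x y (i+2) (l+2)
            + Dmat η x y (i+1) (l+1) * pd (l+2) (fun z => v x z (i+2)) y
            - (pd (l+2) (fun z => v x z (i+1)) y * Dmat η x y (i+2) (l+1)
              + Dmat η x y (i+1) (l+2) * pd (l+1) (fun z => v x z (i+2)) y)) x := by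
        intro i
        exact ((hdd y x (i+1) (l+1)).mul (hdd y x (i+2) (l+2))).sub
          ((hdd y x (i+1) (l+2)).mul (hdd y x (i+2) (l+1)))
      have hsum := HasDerivAt.sum (u := Finset.univ)
        (fun i (_ : i ∈ Finset.univ) => (hbd i).mul (hadjd i))
      have h0 : (∑ i : Fin 3,
          (((∑ j, ∑ k, b x y j * Amat η x y k j * pd k (fun z => v x z i) y)
              - b x y i * divA η v x y) * adjE (Dmat η x y) l i
            + b x y i * (pd (l+1) (fun z => v x z (i+1)) y * Dmat η x y (i+2) (l+2)
              + Dmat η x y (i+1) (l+1) * pd (l+2) (fun z => v x z (i+2)) y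
              - (pd (l+2) (fun z => v x z (i+1)) y * Dmat η x y (i+2) (l+1)
                + Dmat η x y (i+1) (l+2) * pd (l+1) (fun z => v x z (i+2)) y)))) = 0 := by
        simp only [divA, hA]
        fin_cases l
        · exact keyIdentity0 (Dmat η x y) (fun a c => pd c (fun z => v x z a) y)
            (fun i => b x y i) hδ
        · exact keyIdentity1 (Dmat η x y) (fun a c => pd c (fun z => v x z a) y)
            (fun i => b x y i) hδ
        · exact keyIdentity2 (Dmat η x y) (fun a c => pd c (fun z => v x z a) y)
            (fun i => b x y i) hδ
      rw [h0] at hsum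
      exact hsum.hasDerivWithinAt
  have hQconst : ∀ y ∈ Om, ∀ t ∈ Icc (0 : ℝ) T,
      (Dmat η t y).det * R t y = (Dmat η 0 y).det * R 0 y := by
    intro y hy
    refine constant_of_has_deriv_right_zero
      (f := fun s => (Dmat η s y).det * R s y) ?_ ?_
    · have hdetc : Continuous fun s => (Dmat η s y).det := by
        have hfun : (fun s => (Dmat η s y).det) = fun s =>
            Dmat η s y 0 0 * Dmat η s y 1 1 * Dmat η s y 2 2
            - Dmat η s y 0 0 * Dmat η s y 1 2 * Dmat η s y 2 1
            - Dmat η s y 0 1 * Dmat η s y 1 0 * Dmat η s y 2 2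
            + Dmat η s y 0 1 * Dmat η s y 1 2 * Dmat η s y 2 0
            + Dmat η s y 0 2 * Dmat η s y 1 0 * Dmat η s y 2 1
            - Dmat η s y 0 2 * Dmat η s y 1 1 * Dmat η s y 2 0 :=
          funext fun s => Matrix.det_fin_three _
        rw [hfun]
        exact ((((((hdcont y 0 0).mul (hdcont y 1 1)).mul (hdcont y 2 2)).sub
          (((hdcont y 0 0).mul (hdcont y 1 2)).mul (hdcont y 2 1))).sub
          (((hdcont y 0 1).mul (hdcont y 1 0)).mul (hdcont y 2 2))).add
          (((hdcont y 0 1).mul (hdcont y 1 2)).mul (hdcont y 2 0))).add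
          (((hdcont y 0 2).mul (hdcont y 1 0)).mul (hdcont y 2 1)) |>.sub
          (((hdcont y 0 2).mul (hdcont y 1 1)).mul (hdcont y 2 0))
      exact (hdetc.mul (hRdiff y).continuous).continuousOn
    · intro x hx
      have hx' : x ∈ Icc (0 : ℝ) T := Ico_subset_Icc_self hx
      have hδ : (Dmat η x y).det ≠ 0 := hinv x hx' y hy
      have hRd : HasDerivAt (fun s => R s y) (-(R x y * divA η v x y)) x := by
        have h := ((hRdiff y) x).hasDerivAt
        have h2 := hcont x hx' y hy
        have h3 : deriv (fun s => R s y) x = -(R x y * divA η v x y) := by linarith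
        rwa [h3] at h
      have hdet : HasDerivAt (fun s => (Dmat η s y).det)
          ((pd 0 (fun z => v x z 0) y * Dmat η x y 1 1
              + Dmat η x y 0 0 * pd 1 (fun z => v x z 1) y) * Dmat η x y 2 2
            + Dmat η x y 0 0 * Dmat η x y 1 1 * pd 2 (fun z => v x z 2) y
            - ((pd 0 (fun z => v x z 0) y * Dmat η x y 1 2
              + Dmat η x y 0 0 * pd 2 (fun z => v x z 1) y) * Dmat η x y 2 1
              + Dmat η x y 0 0 * Dmat η x y 1 2 * pd 1 (fun z => v x z 2) y)
            - ((pd 1 (fun z => v x z 0) y * Dmat η x y 1 0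
              + Dmat η x y 0 1 * pd 0 (fun z => v x z 1) y) * Dmat η x y 2 2
              + Dmat η x y 0 1 * Dmat η x y 1 0 * pd 2 (fun z => v x z 2) y)
            + ((pd 1 (fun z => v x z 0) y * Dmat η x y 1 2
              + Dmat η x y 0 1 * pd 2 (fun z => v x z 1) y) * Dmat η x y 2 0
              + Dmat η x y 0 1 * Dmat η x y 1 2 * pd 0 (fun z => v x z 2) y)
            + ((pd 2 (fun z => v x z 0) y * Dmat η x y 1 0
              + Dmat η x y 0 2 * pd 0 (fun z => v x z 1) y) * Dmat η x y 2 1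
              + Dmat η x y 0 2 * Dmat η x y 1 0 * pd 1 (fun z => v x z 2) y)
            - ((pd 2 (fun z => v x z 0) y * Dmat η x y 1 1
              + Dmat η x y 0 2 * pd 1 (fun z => v x z 1) y) * Dmat η x y 2 0
              + Dmat η x y 0 2 * Dmat η x y 1 1 * pd 0 (fun z => v x z 2) y)) x := by
        have hfun : (fun s => (Dmat η s y).det) = fun s =>
            Dmat η s y 0 0 * Dmat η s y 1 1 * Dmat η s y 2 2
            - Dmat η s y 0 0 * Dmat η s y 1 2 * Dmat η s y 2 1
            - Dmat η s y 0 1 * Dmat η s y 1 0 * Dmat η s y 2 2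
            + Dmat η s y 0 1 * Dmat η s y 1 2 * Dmat η s y 2 0
            + Dmat η s y 0 2 * Dmat η s y 1 0 * Dmat η s y 2 1
            - Dmat η s y 0 2 * Dmat η s y 1 1 * Dmat η s y 2 0 :=
          funext fun s => Matrix.det_fin_three _
        rw [hfun]
        exact ((((((hdd y x 0 0).mul (hdd y x 1 1)).mul (hdd y x 2 2)).sub
          (((hdd y x 0 0).mul (hdd y x 1 2)).mul (hdd y x 2 1))).sub
          (((hdd y x 0 1).mul (hdd y x 1 0)).mul (hdd y x 2 2))).add
          (((hdd y x 0 1).mul (hdd y x 1 2)).mul (hdd y x 2 0))).add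
          (((hdd y x 0 2).mul (hdd y x 1 0)).mul (hdd y x 2 1)) |>.sub
          (((hdd y x 0 2).mul (hdd y x 1 1)).mul (hdd y x 2 0))
      have hQ := hdet.mul hRd
      have hdv : divA η v x y
          = ∑ l, ∑ i, (((Dmat η x y).det)⁻¹ * adjE (Dmat η x y) l i)
              * pd l (fun z => v x z i) y := by
        simp only [divA, hA]
      have h0 : ((pd 0 (fun z => v x z 0) y * Dmat η x y 1 1
              + Dmat η x y 0 0 * pd 1 (fun z => v x z 1) y) * Dmat η x y 2 2
            + Dmat η x y 0 0 * Dmat η x y 1 1 * pd 2 (fun z => v x z 2) y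
            - ((pd 0 (fun z => v x z 0) y * Dmat η x y 1 2
              + Dmat η x y 0 0 * pd 2 (fun z => v x z 1) y) * Dmat η x y 2 1
              + Dmat η x y 0 0 * Dmat η x y 1 2 * pd 1 (fun z => v x z 2) y)
            - ((pd 1 (fun z => v x z 0) y * Dmat η x y 1 0
              + Dmat η x y 0 1 * pd 0 (fun z => v x z 1) y) * Dmat η x y 2 2
              + Dmat η x y 0 1 * Dmat η x y 1 0 * pd 2 (fun z => v x z 2) y)
            + ((pd 1 (fun z => v x z 0) y * Dmat η x y 1 2
              + Dmat η x y 0 1 * pd 2 (fun z => v x z 1) y) * Dmat η x y 2 0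
              + Dmat η x y 0 1 * Dmat η x y 1 2 * pd 0 (fun z => v x z 2) y)
            + ((pd 2 (fun z => v x z 0) y * Dmat η x y 1 0
              + Dmat η x y 0 2 * pd 0 (fun z => v x z 1) y) * Dmat η x y 2 1
              + Dmat η x y 0 2 * Dmat η x y 1 0 * pd 1 (fun z => v x z 2) y)
            - ((pd 2 (fun z => v x z 0) y * Dmat η x y 1 1
              + Dmat η x y 0 2 * pd 1 (fun z => v x z 1) y) * Dmat η x y 2 0
              + Dmat η x y 0 2 * Dmat η x y 1 1 * pd 0 (fun z => v x z 2) y)) * R x y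
            + (Dmat η x y).det * -(R x y * divA η v x y) = 0 :=
        jacobiQ (Dmat η x y) (fun a c => pd c (fun z => v x z a) y)
          (R x y) (divA η v x y) hδ hdv
      rw [h0] at hQ
      exact hQ.hasDerivWithinAt
  have hsumA : ∀ (t : ℝ) (y : V3) (l : Fin 3),
      (∑ i, b t y i * Amat η t y l i)
        = ((Dmat η t y).det)⁻¹ * (∑ i, b t y i * adjE (Dmat η t y) l i) := by
    intro t y l
    rw [Finset.mul_sum]
    exact Finset.sum_congr rfl fun i _ => by rw [hA]; ring
  constructor
  · intro l t ht y hy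
    have hN := hNconst y hy l t ht
    have hQ := hQconst y hy t ht
    have hδt : (Dmat η t y).det ≠ 0 := hinv t ht y hy
    have hδ0 : (Dmat η 0 y).det ≠ 0 := hinv 0 h0T y hy
    have hRt : R t y ≠ 0 := (hRpos t y).ne'
    have hR0 : R 0 y ≠ 0 := (hRpos 0 y).ne'
    rw [hsumA t y l, hsumA 0 y l, hN, inv_mul_eq_div, inv_mul_eq_div,
      div_div, div_div, hQ]
  · intro h0 ρ₀ b₀ hρ hb0 l t ht y hy
    have hD0 : Dmat η 0 y = 1 := by
      ext a c
      show pd c (fun z => η 0 z a) y = _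
      have h1 : (fun z => η 0 z a) = fun z : V3 => z a := funext fun z => by rw [h0 z]
      have h2 : pd c (fun z : V3 => z a) y = e3 c a := by
        have hp : HasFDerivAt (fun z : V3 => z a)
            (ContinuousLinearMap.proj (R := ℝ) (φ := fun _ : Fin 3 => ℝ) a) y :=
          (ContinuousLinearMap.proj (R := ℝ) (φ := fun _ : Fin 3 => ℝ) a).hasFDerivAt
        show fderiv ℝ (fun z : V3 => z a) y (e3 c) = _
        rw [hp.fderiv]
        rfl
      rw [h1, h2]
      simp [e3, Pi.single_apply, Matrix.one_apply, eq_comm]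
    have hN := hNconst y hy l t ht
    have hone : ∀ i : Fin 3, adjE (1 : Matrix (Fin 3) (Fin 3) ℝ) l i
        = (1 : Matrix (Fin 3) (Fin 3) ℝ) l i := fun i => by
      rw [← adjE_eq, Matrix.adjugate_one]
    have hval : (∑ i, b 0 y i * adjE (Dmat η 0 y) l i) = b₀ y l := by
      rw [hD0]
      simp only [hone, Matrix.one_apply]
      rw [← hb0 y]
      simp
    rw [hsumA t y l, hN, hval]
    rfl
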